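/- Let d ≥ 2, β > 0, N_c ≥ 1, and k ∈ ℝᵈ, and let M_G(k) be the complex d×d matrix with entries M_G(k)_{μν} = (2β/N_c)·[δ_{μν}·∑_{ρ=1}^{d} sin²(k_ρ/2) − exp(i(k_μ − k_ν)/2)·sin(k_μ/2)·sin(k_ν/2)]. Fix indices α ≠ i in {1,…,d} with sin(k_α/2) ≠ 0, and define y ∈ ℂᵈ by y_α = exp(i k_α/2)·sin(k_i/2), y_i = −exp(i k_i/2)·sin(k_α/2), and y_μ = 0 for μ ∉ {α, i}. Then M_G(k)·y = (2β/N_c)·(∑_{ρ=1}^{d} sin²(k_ρ/2))·y. -/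
import Mathlib


open Matrix Complex

/-- The non-zero eigenmodes of the harmonic gauge matrix: the vector
`y = e^{ik_α/2} sin(k_i/2) ê_α − e^{ik_i/2} sin(k_α/2) ê_i` (for `α ≠ i` with
`sin(k_α/2) ≠ 0`) is an eigenvector of `M_G(k)` with eigenvalue
`(2β/N_c)·∑_ρ sin²(k_ρ/2)`. -/
theorem gauge_matrix_nonzero_mode {d : ℕ} (hd : 2 ≤ d) (β : ℝ) (hβ : 0 < β)
    (Nc : ℕ) (hNc : 1 ≤ Nc) (k : Fin d → ℝ)
    (MG : Matrix (Fin d) (Fin d) ℂ)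
    (hMG : ∀ μ ν : Fin d, MG μ ν = ((2 * β / Nc : ℝ) : ℂ) *
      ((if μ = ν then 1 else 0) * ((∑ ρ : Fin d, Real.sin (k ρ / 2) ^ 2 : ℝ) : ℂ)
        - Complex.exp (Complex.I * ((k μ - k ν : ℝ) : ℂ) / 2) *
          ((Real.sin (k μ / 2) : ℂ)) * ((Real.sin (k ν / 2) : ℂ))))
    (α i : Fin d) (hαi : α ≠ i) (hkα : Real.sin (k α / 2) ≠ 0)
    (y : Fin d → ℂ)
    (hyα : y α = Complex.exp (Complex.I * ((k α : ℝ) : ℂ) / 2) * ((Real.sin (k i / 2) : ℂ)))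
    (hyi : y i = -(Complex.exp (Complex.I * ((k i : ℝ) : ℂ) / 2) * ((Real.sin (k α / 2) : ℂ))))
    (hy0 : ∀ μ : Fin d, μ ≠ α → μ ≠ i → y μ = 0) :
    MG *ᵥ y = (((2 * β / Nc) * (∑ ρ : Fin d, Real.sin (k ρ / 2) ^ 2) : ℝ) : ℂ) • y := by
  have hmul : ∀ a b : ℝ, Complex.exp (Complex.I * ((a - b : ℝ) : ℂ) / 2)
      * Complex.exp (Complex.I * (b : ℝ) / 2) = Complex.exp (Complex.I * (a : ℝ) / 2) := by
    intro a b
    rw [← Complex.exp_add]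
    congr 1; push_cast; ring
  have h0 : ∀ a : ℝ, Complex.exp (Complex.I * ((a - a : ℝ) : ℂ) / 2) = 1 := by
    intro a; rw [sub_self]; simp
  funext μ
  have hsum : (MG *ᵥ y) μ = MG μ α * y α + MG μ i * y i :=
    Finset.sum_eq_add α i hαi
      (fun ν _ hν => by rw [hy0 ν hν.1 hν.2, mul_zero])
      (fun h => absurd (Finset.mem_univ α) h)
      (fun h => absurd (Finset.mem_univ i) h)
  rw [hsum, hMG, hMG, hyα, hyi]
  simp only [Pi.smul_apply, smul_eq_mul, Complex.ofReal_mul]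
  set c : ℂ := ((2 * β / Nc : ℝ) : ℂ) with hc
  set sα : ℂ := (Real.sin (k α / 2) : ℂ) with hsα
  set si : ℂ := (Real.sin (k i / 2) : ℂ) with hsi
  by_cases hμα : μ = α
  · subst hμα
    rw [hyα]
    simp only [eq_self_iff_true, if_true, if_neg hαi]
    linear_combination (c * sα * sα * si) * hmul (k μ) (k i)
      - (c * sα * sα * si * Complex.exp (Complex.I * ((k μ : ℝ) : ℂ) / 2)) * h0 (k μ)
  · by_cases hμi : μ = i
    · subst hμi
      rw [hyi]
      simp only [eq_self_iff_true, if_true, if_neg (Ne.symm hαi), if_neg hμα]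
      linear_combination (-(c * si * si * sα)) * hmul (k μ) (k α)
        + (c * si * si * sα * Complex.exp (Complex.I * ((k μ : ℝ) : ℂ) / 2)) * h0 (k μ)
    · rw [hy0 μ hμα hμi]
      simp only [if_neg hμα, if_neg hμi]
      linear_combination (-(c * (Real.sin (k μ / 2) : ℂ) * sα * si)) * hmul (k μ) (k α)
        + (c * (Real.sin (k μ / 2) : ℂ) * sα * si) * hmul (k μ) (k i)
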